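/- Let w, t, v ∈ Q and let 1 ≤ i, k, p ≤ m with k ≠ p. Then the triple commutator [E_{i,w}, [E_{k,t}, E*_{p,v}]] acts on M as follows: (1) if i = p, it sends (z,x,f) to (z − f(x_k)·⟨t,v⟩·w, x + (⟨w,z⟩ + f(x_i)·q(w) − f(x_k)·⟨t,v⟩·q(w))·⟨t,v⟩·x_k − f(x_k)·⟨t,v⟩·q(w)·x_i, f); (2) if i ≠ p (in particular if i = k), it is the identity automorphism of M. -/

import Mathlib

open QuadraticMap
open scoped commutatorElement

/-- The DSER elementary orthogonal transformation `E_{i,w}` on `M = Q ⊕ P ⊕ P*`,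
`P = A^m`:  `E_{i,w}(z,x,f) = (z − f(xᵢ)•w, x + ⟨w,z⟩•xᵢ − f(xᵢ)·q(w)•xᵢ, f)`. -/
noncomputable def Eplus {A Q : Type*} [CommRing A] [AddCommGroup Q] [Module A Q]
    {m : ℕ} (q : QuadraticForm A Q) (i : Fin m) (w : Q) :
    (Q × (Fin m → A) × (Fin m → A)) ≃ₗ[A] (Q × (Fin m → A) × (Fin m → A)) where
  toFun p := (p.1 - p.2.2 i • w,
    p.2.1 + polar ⇑q w p.1 • (Pi.single i 1 : Fin m → A)
      - (p.2.2 i * q w) • (Pi.single i 1 : Fin m → A),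
    p.2.2)
  invFun p := (p.1 + p.2.2 i • w,
    p.2.1 - polar ⇑q w p.1 • (Pi.single i 1 : Fin m → A)
      - (p.2.2 i * q w) • (Pi.single i 1 : Fin m → A),
    p.2.2)
  map_add' p p' := by
    obtain ⟨z, x, f⟩ := p
    obtain ⟨z', x', f'⟩ := p'
    refine Prod.ext ?_ (Prod.ext ?_ rfl)
    · show z + z' - (f i + f' i) • w = (z - f i • w) + (z' - f' i • w)
      module
    · show x + x' + polar ⇑q w (z + z') • (Pi.single i 1 : Fin m → A)
        - ((f i + f' i) * q w) • (Pi.single i 1 : Fin m → A) = _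
      rw [polar_add_right]
      show _ = (x + polar ⇑q w z • (Pi.single i 1 : Fin m → A) - (f i * q w) • (Pi.single i 1 : Fin m → A))
        + (x' + polar ⇑q w z' • (Pi.single i 1 : Fin m → A) - (f' i * q w) • (Pi.single i 1 : Fin m → A))
      module
  map_smul' a p := by
    obtain ⟨z, x, f⟩ := p
    refine Prod.ext ?_ (Prod.ext ?_ rfl)
    · show a • z - (a • f) i • w = a • (z - f i • w)
      simp only [Pi.smul_apply, smul_eq_mul]
      module
    · show a • x + polar ⇑q w (a • z) • (Pi.single i 1 : Fin m → A)
        - ((a • f) i * q w) • (Pi.single i 1 : Fin m → A)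
        = a • (x + polar ⇑q w z • (Pi.single i 1 : Fin m → A) - (f i * q w) • (Pi.single i 1 : Fin m → A))
      rw [polar_smul_right]
      simp only [Pi.smul_apply, smul_eq_mul]
      module
  left_inv p := by
    obtain ⟨z, x, f⟩ := p
    refine Prod.ext ?_ (Prod.ext ?_ rfl)
    · show z - f i • w + f i • w = z
      module
    · show x + polar ⇑q w z • (Pi.single i 1 : Fin m → A) - (f i * q w) • (Pi.single i 1 : Fin m → A)
        - polar ⇑q w (z - f i • w) • (Pi.single i 1 : Fin m → A)
        - (f i * q w) • (Pi.single i 1 : Fin m → A) = x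
      rw [polar_sub_right, polar_smul_right, polar_self]
      simp only [smul_eq_mul]
      module
  right_inv p := by
    obtain ⟨z, x, f⟩ := p
    refine Prod.ext ?_ (Prod.ext ?_ rfl)
    · show z + f i • w - f i • w = z
      module
    · show x - polar ⇑q w z • (Pi.single i 1 : Fin m → A) - (f i * q w) • (Pi.single i 1 : Fin m → A)
        + polar ⇑q w (z + f i • w) • (Pi.single i 1 : Fin m → A)
        - (f i * q w) • (Pi.single i 1 : Fin m → A) = x
      rw [polar_add_right, polar_smul_right, polar_self]
      simp only [smul_eq_mul]
      module

/-- The DSER elementary orthogonal transformation `E*_{i,w}` on `M = Q ⊕ P ⊕ P*`: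
`E*_{i,w}(z,x,f) = (z − fᵢ(x)•w, x, f + ⟨w,z⟩•fᵢ − fᵢ(x)·q(w)•fᵢ)`. -/
noncomputable def Estar {A Q : Type*} [CommRing A] [AddCommGroup Q] [Module A Q]
    {m : ℕ} (q : QuadraticForm A Q) (i : Fin m) (w : Q) :
    (Q × (Fin m → A) × (Fin m → A)) ≃ₗ[A] (Q × (Fin m → A) × (Fin m → A)) where
  toFun p := (p.1 - p.2.1 i • w,
    p.2.1,
    p.2.2 + polar ⇑q w p.1 • (Pi.single i 1 : Fin m → A)
      - (p.2.1 i * q w) • (Pi.single i 1 : Fin m → A))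
  invFun p := (p.1 + p.2.1 i • w,
    p.2.1,
    p.2.2 - polar ⇑q w p.1 • (Pi.single i 1 : Fin m → A)
      - (p.2.1 i * q w) • (Pi.single i 1 : Fin m → A))
  map_add' p p' := by
    obtain ⟨z, x, f⟩ := p
    obtain ⟨z', x', f'⟩ := p'
    refine Prod.ext ?_ (Prod.ext rfl ?_)
    · show z + z' - (x i + x' i) • w = (z - x i • w) + (z' - x' i • w)
      module
    · show f + f' + polar ⇑q w (z + z') • (Pi.single i 1 : Fin m → A)
        - ((x i + x' i) * q w) • (Pi.single i 1 : Fin m → A) = _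
      rw [polar_add_right]
      show _ = (f + polar ⇑q w z • (Pi.single i 1 : Fin m → A)
          - (x i * q w) • (Pi.single i 1 : Fin m → A))
        + (f' + polar ⇑q w z' • (Pi.single i 1 : Fin m → A)
          - (x' i * q w) • (Pi.single i 1 : Fin m → A))
      module
  map_smul' a p := by
    obtain ⟨z, x, f⟩ := p
    refine Prod.ext ?_ (Prod.ext rfl ?_)
    · show a • z - (a • x) i • w = a • (z - x i • w)
      simp only [Pi.smul_apply, smul_eq_mul]
      module
    · show a • f + polar ⇑q w (a • z) • (Pi.single i 1 : Fin m → A)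
        - ((a • x) i * q w) • (Pi.single i 1 : Fin m → A)
        = a • (f + polar ⇑q w z • (Pi.single i 1 : Fin m → A)
          - (x i * q w) • (Pi.single i 1 : Fin m → A))
      rw [polar_smul_right]
      simp only [Pi.smul_apply, smul_eq_mul]
      module
  left_inv p := by
    obtain ⟨z, x, f⟩ := p
    refine Prod.ext ?_ (Prod.ext rfl ?_)
    · show z - x i • w + x i • w = z
      module
    · show f + polar ⇑q w z • (Pi.single i 1 : Fin m → A)
        - (x i * q w) • (Pi.single i 1 : Fin m → A)
        - polar ⇑q w (z - x i • w) • (Pi.single i 1 : Fin m → A)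
        - (x i * q w) • (Pi.single i 1 : Fin m → A) = f
      rw [polar_sub_right, polar_smul_right, polar_self]
      simp only [smul_eq_mul]
      module
  right_inv p := by
    obtain ⟨z, x, f⟩ := p
    refine Prod.ext ?_ (Prod.ext rfl ?_)
    · show z + x i • w - x i • w = z
      module
    · show f - polar ⇑q w z • (Pi.single i 1 : Fin m → A)
        - (x i * q w) • (Pi.single i 1 : Fin m → A)
        + polar ⇑q w (z + x i • w) • (Pi.single i 1 : Fin m → A)
        - (x i * q w) • (Pi.single i 1 : Fin m → A) = f
      rw [polar_add_right, polar_smul_right, polar_self]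
      simp only [smul_eq_mul]
      module

section Aux
variable {A Q : Type*} [CommRing A] [AddCommGroup Q] [Module A Q] {m : ℕ}

lemma mul_app (e f : (Q × (Fin m → A) × (Fin m → A)) ≃ₗ[A] (Q × (Fin m → A) × (Fin m → A)))
    (x : Q × (Fin m → A) × (Fin m → A)) : (e * f) x = e (f x) := rfl

lemma inv_app (e : (Q × (Fin m → A) × (Fin m → A)) ≃ₗ[A] (Q × (Fin m → A) × (Fin m → A)))
    (x : Q × (Fin m → A) × (Fin m → A)) : e⁻¹ x = e.symm x := rfl

lemma Eplus_apply (q : QuadraticForm A Q) (i : Fin m) (w : Q) (z : Q) (x f : Fin m → A) :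
    Eplus q i w (z, x, f) = (z - f i • w,
      x + polar ⇑q w z • (Pi.single i 1 : Fin m → A)
        - (f i * q w) • (Pi.single i 1 : Fin m → A), f) := rfl

lemma Eplus_symm_apply (q : QuadraticForm A Q) (i : Fin m) (w : Q) (z : Q) (x f : Fin m → A) :
    (Eplus q i w).symm (z, x, f) = (z + f i • w,
      x - polar ⇑q w z • (Pi.single i 1 : Fin m → A)
        - (f i * q w) • (Pi.single i 1 : Fin m → A), f) := rfl

lemma Estar_apply (q : QuadraticForm A Q) (i : Fin m) (w : Q) (z : Q) (x f : Fin m → A) :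
    Estar q i w (z, x, f) = (z - x i • w, x,
      f + polar ⇑q w z • (Pi.single i 1 : Fin m → A)
        - (x i * q w) • (Pi.single i 1 : Fin m → A)) := rfl

lemma Estar_symm_apply (q : QuadraticForm A Q) (i : Fin m) (w : Q) (z : Q) (x f : Fin m → A) :
    (Estar q i w).symm (z, x, f) = (z + x i • w, x,
      f - polar ⇑q w z • (Pi.single i 1 : Fin m → A)
        - (x i * q w) • (Pi.single i 1 : Fin m → A)) := rfl

lemma one_app {A Q : Type*} [CommRing A] [AddCommGroup Q] [Module A Q] {m : ℕ}
    (x : Q × (Fin m → A) × (Fin m → A)) :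
    (1 : (Q × (Fin m → A) × (Fin m → A)) ≃ₗ[A] (Q × (Fin m → A) × (Fin m → A))) x = x := rfl

end Aux

theorem triple_commutator_Eplus_EplusEstar
    {A Q : Type*} [CommRing A] [Invertible (2 : A)] [AddCommGroup Q] [Module A Q]
    {m : ℕ} (q : QuadraticForm A Q) (i k p : Fin m) (hkp : k ≠ p)
    (w t v : Q) :
    (i = p → ∀ (z : Q) (x f : Fin m → A),
      ⁅Eplus q i w, ⁅Eplus q k t, Estar q p v⁆⁆ (z, x, f)
        = (z - (f k * polar ⇑q t v) • w,
           x + ((polar ⇑q w z + f i * q w - f k * polar ⇑q t v * q w)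
               * polar ⇑q t v) • (Pi.single k 1 : Fin m → A)
             - (f k * polar ⇑q t v * q w) • (Pi.single i 1 : Fin m → A),
           f)) ∧
    (i ≠ p → ⁅Eplus q i w, ⁅Eplus q k t, Estar q p v⁆⁆ = 1) := by
  constructor
  · rintro rfl z x f
    have hki : k ≠ i := hkp
    rw [commutatorElement_def, commutatorElement_def, mul_inv_rev, mul_inv_rev, mul_inv_rev,
      inv_inv, inv_inv]
    simp only [mul_app, inv_app, Eplus_apply, Eplus_symm_apply, Estar_apply, Estar_symm_apply,
      Pi.add_apply, Pi.sub_apply, Pi.smul_apply, smul_eq_mul,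
      Pi.single_eq_same, Pi.single_eq_of_ne hki, Pi.single_eq_of_ne hki.symm,
      polar_add_right, polar_sub_right, polar_smul_right, polar_self,
      mul_zero, mul_one, zero_mul, one_mul, add_zero, zero_add, sub_zero, smul_eq_mul]
    simp only [polar_comm ⇑q v t, polar_comm ⇑q v w, polar_comm ⇑q t w]
    refine Prod.ext ?_ (Prod.ext ?_ ?_) <;> · dsimp only; module
  · intro hip
    apply LinearEquiv.ext
    rintro ⟨z, x, f⟩
    rcases eq_or_ne i k with rfl | hik
    · rw [commutatorElement_def, commutatorElement_def, mul_inv_rev, mul_inv_rev, mul_inv_rev,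
        inv_inv, inv_inv]
      simp only [mul_app, inv_app, Eplus_apply, Eplus_symm_apply, Estar_apply, Estar_symm_apply,
        Pi.add_apply, Pi.sub_apply, Pi.smul_apply, smul_eq_mul,
        Pi.single_eq_same, Pi.single_eq_of_ne hip, Pi.single_eq_of_ne hip.symm,
        polar_add_right, polar_sub_right, polar_smul_right, polar_self,
        mul_zero, mul_one, zero_mul, one_mul, add_zero, zero_add, sub_zero, smul_eq_mul,
        one_app]
      simp only [polar_comm ⇑q v t, polar_comm ⇑q v w, polar_comm ⇑q t w]
      refine Prod.ext ?_ (Prod.ext ?_ ?_) <;> · dsimp only; module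
    · rw [commutatorElement_def, commutatorElement_def, mul_inv_rev, mul_inv_rev, mul_inv_rev,
        inv_inv, inv_inv]
      simp only [mul_app, inv_app, Eplus_apply, Eplus_symm_apply, Estar_apply, Estar_symm_apply,
        Pi.add_apply, Pi.sub_apply, Pi.smul_apply, smul_eq_mul,
        Pi.single_eq_same, Pi.single_eq_of_ne hip, Pi.single_eq_of_ne hip.symm,
        Pi.single_eq_of_ne hik, Pi.single_eq_of_ne hik.symm,
        Pi.single_eq_of_ne hkp, Pi.single_eq_of_ne hkp.symm,
        polar_add_right, polar_sub_right, polar_smul_right, polar_self,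
        mul_zero, mul_one, zero_mul, one_mul, add_zero, zero_add, sub_zero, smul_eq_mul,
        one_app]
      simp only [polar_comm ⇑q v t, polar_comm ⇑q v w, polar_comm ⇑q t w]
      refine Prod.ext ?_ (Prod.ext ?_ ?_) <;> · dsimp only; module
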